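/- Let N ∈ ℕ with N ≥ 1 and d ∈ ℝ, and let a : ℕ → ℝ be the even-parity QES coefficient sequence for parameters (N, d). Then for every k ≥ 1, a(k) = ((−1)^k / (k!·(k−1)!)) · det P^{(N,k)}(d), where P^{(N,k)}(d) is the k×k tridiagonal matrix defined in the context. -/

import Mathlib

/-- The k×k tridiagonal matrix `P^(N,k)(d)` of the even-parity QES construction:
`P 0 0 = d`, `P i i = 2·i·d` for `i ≥ 1`, `P 0 1 = 1`,
`P i (i+1) = i·(i+1)` for `i ≥ 1`, `P i (i-1) = 2·(N − i + 1)`, all other entries `0`. -/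
def Pmat (N : ℕ) (d : ℝ) (k : ℕ) : Matrix (Fin k) (Fin k) ℝ :=
  Matrix.of fun i j =>
    if (i : ℕ) = 0 ∧ (j : ℕ) = 0 then d
    else if (j : ℕ) = (i : ℕ) then 2 * (i : ℝ) * d
    else if (i : ℕ) = 0 ∧ (j : ℕ) = 1 then 1
    else if (j : ℕ) = (i : ℕ) + 1 then (i : ℝ) * ((i : ℝ) + 1)
    else if (j : ℕ) + 1 = (i : ℕ) then 2 * ((N : ℝ) - (i : ℝ) + 1)
    else 0

def pent (N : ℕ) (d : ℝ) (i j : ℕ) : ℝ :=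
  if i = 0 ∧ j = 0 then d
  else if j = i then 2 * (i : ℝ) * d
  else if i = 0 ∧ j = 1 then 1
  else if j = i + 1 then (i : ℝ) * ((i : ℝ) + 1)
  else if j + 1 = i then 2 * ((N : ℝ) - (i : ℝ) + 1)
  else 0

lemma Pmat_apply (N : ℕ) (d : ℝ) (k : ℕ) (i j : Fin k) :
    Pmat N d k i j = pent N d (i : ℕ) (j : ℕ) := rfl

lemma pent_diag (N : ℕ) (d : ℝ) (m : ℕ) (hm : m ≠ 0) : pent N d m m = 2*(m:ℝ)*d := by
  unfold pent; rw [if_neg (by omega), if_pos rfl]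

lemma pent_sub (N : ℕ) (d : ℝ) (m : ℕ) (hm : m ≠ 0) : pent N d (m+1) m = 2*((N:ℝ)-((m:ℝ)+1)+1) := by
  unfold pent
  rw [if_neg (by omega), if_neg (by omega), if_neg (by omega), if_neg (by omega), if_pos (by omega)]
  push_cast; ring

lemma pent_super (N : ℕ) (d : ℝ) (m : ℕ) (hm : m ≠ 0) : pent N d m (m+1) = (m:ℝ)*((m:ℝ)+1) := by
  unfold pent; rw [if_neg (by omega), if_neg (by omega), if_neg (by omega), if_pos rfl]

lemma pent_zero (N : ℕ) (d : ℝ) (i j : ℕ) (h1 : ¬(i=0∧j=0)) (h2 : j ≠ i) (h3 : ¬(i=0∧j=1))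
    (h4 : j ≠ i+1) (h5 : j+1 ≠ i) : pent N d i j = 0 := by
  unfold pent; rw [if_neg h1, if_neg h2, if_neg h3, if_neg h4, if_neg h5]

lemma coe_succAbove (n : ℕ) (p : Fin (n+1)) (i : Fin n) :
    ((p.succAbove i : Fin (n+1)) : ℕ) = if (i:ℕ) < (p:ℕ) then (i:ℕ) else (i:ℕ)+1 := by
  rcases lt_or_ge (Fin.castSucc i) p with h | h
  · have h' : (i:ℕ) < (p:ℕ) := by simpa [Fin.lt_iff_val_lt_val] using h
    rw [Fin.succAbove_of_castSucc_lt _ _ h]; simp [h']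
  · have h' : ¬ (i:ℕ) < (p:ℕ) := by simpa [Fin.le_iff_val_le_val] using h
    rw [Fin.succAbove_of_le_castSucc _ _ h]; simp [h']

lemma detP_rec (N : ℕ) (d : ℝ) (k : ℕ) (hk : 1 ≤ k) :
    (Pmat N d (k+2)).det
      = 2*((k:ℝ)+1)*d * (Pmat N d (k+1)).det
        - 2*((N:ℝ)-(k:ℝ))*(k:ℝ)*((k:ℝ)+1) * (Pmat N d k).det := by
  rw [Matrix.det_succ_row (Pmat N d (k+2)) (Fin.last (k+1))]
  rw [Fin.sum_univ_castSucc, Fin.sum_univ_castSucc]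
  have hz : ∀ j : Fin k,
      (-1 : ℝ) ^ ((Fin.last (k+1) : Fin (k+2)) + ((j.castSucc.castSucc : Fin (k+2))) : ℕ)
        * Pmat N d (k+2) (Fin.last (k+1)) j.castSucc.castSucc
        * ((Pmat N d (k+2)).submatrix (Fin.last (k+1)).succAbove
            (j.castSucc.castSucc).succAbove).det = 0 := by
    intro j
    have hj : (j : ℕ) < k := j.isLt
    rw [Pmat_apply]
    have : pent N d ((Fin.last (k+1) : Fin (k+2)) : ℕ) ((j.castSucc.castSucc : Fin (k+2)) : ℕ) = 0 := by
      simp only [Fin.val_last, Fin.coe_castSucc]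
      exact pent_zero N d _ _ (by omega) (by omega) (by omega) (by omega) (by omega)
    rw [this]; ring
  rw [Finset.sum_congr rfl (fun j _ => hz j), Finset.sum_const_zero]
  have hlastlast : Pmat N d (k+2) (Fin.last (k+1)) (Fin.last (k+1)) = 2*((k:ℝ)+1)*d := by
    rw [Pmat_apply]
    simp only [Fin.val_last]
    rw [pent_diag N d (k+1) (by omega)]
    push_cast; ring
  have hsub : Pmat N d (k+2) (Fin.last (k+1)) ((Fin.last k).castSucc) = 2*((N:ℝ)-(k:ℝ)) := by
    rw [Pmat_apply]
    simp only [Fin.val_last, Fin.coe_castSucc]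
    rw [pent_sub N d k (by omega)]
    push_cast; ring
  have hminor1 : (Pmat N d (k+2)).submatrix (Fin.last (k+1)).succAbove
      (Fin.last (k+1)).succAbove = Pmat N d (k+1) := by
    ext i j
    rw [Matrix.submatrix_apply, Fin.succAbove_last, Pmat_apply, Pmat_apply,
      Fin.coe_castSucc, Fin.coe_castSucc]
  have hminor2 : ((Pmat N d (k+2)).submatrix (Fin.last (k+1)).succAbove
      ((Fin.last k).castSucc).succAbove).det = (k:ℝ) * ((k:ℝ)+1) * (Pmat N d k).det := by
    set M := (Pmat N d (k+2)).submatrix (Fin.last (k+1)).succAbove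
      ((Fin.last k).castSucc).succAbove with hM
    have hMapp : ∀ (i : Fin (k+1)) (j : Fin (k+1)),
        M i j = pent N d (i : ℕ) (if (j:ℕ) < k then (j:ℕ) else (j:ℕ)+1) := by
      intro i j
      rw [hM, Matrix.submatrix_apply, Fin.succAbove_last, Pmat_apply, Fin.coe_castSucc,
        coe_succAbove]
      simp
    obtain ⟨k', rfl⟩ : ∃ k', k = k' + 1 := ⟨k - 1, by omega⟩
    rw [Matrix.det_succ_column M (Fin.last (k'+1)), Fin.sum_univ_castSucc]
    have hz2 : ∀ i : Fin (k'+1),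
        (-1 : ℝ) ^ (((i.castSucc : Fin (k'+2)) : ℕ) + ((Fin.last (k'+1) : Fin (k'+2)) : ℕ))
          * M i.castSucc (Fin.last (k'+1))
          * (M.submatrix (i.castSucc).succAbove (Fin.last (k'+1)).succAbove).det = 0 := by
      intro i
      have hi : (i : ℕ) < k'+1 := i.isLt
      have : M i.castSucc (Fin.last (k'+1)) = 0 := by
        rw [hMapp]
        simp only [Fin.coe_castSucc, Fin.val_last]
        rw [if_neg (by omega : ¬ k'+1 < k'+1)]
        exact pent_zero N d _ _ (by omega) (by omega) (by omega) (by omega) (by omega)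
      rw [this]; ring
    rw [Finset.sum_congr rfl (fun i _ => hz2 i), Finset.sum_const_zero, zero_add]
    have hMent : M (Fin.last (k'+1)) (Fin.last (k'+1)) = ((k'+1:ℕ):ℝ) * (((k'+1:ℕ):ℝ)+1) := by
      rw [hMapp]
      simp only [Fin.val_last]
      rw [if_neg (by omega : ¬ k'+1 < k'+1)]
      exact pent_super N d (k'+1) (by omega)
    have hminor3 : M.submatrix (Fin.last (k'+1)).succAbove (Fin.last (k'+1)).succAbove
        = Pmat N d (k'+1) := by
      ext i j
      rw [Matrix.submatrix_apply, Fin.succAbove_last, hMapp, Pmat_apply, Fin.coe_castSucc,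
        Fin.coe_castSucc]
      rw [if_pos j.isLt]
    rw [hMent, hminor3]
    simp only [Fin.val_last]
    rw [show (k'+1 + (k'+1)) = 2*(k'+1) from by ring]
    rw [show ((-1 : ℝ) ^ (2*(k'+1)) = 1) from by rw [pow_mul]; norm_num]
    push_cast; ring
  rw [hminor1, hminor2, hlastlast, hsub]
  simp only [Fin.val_last, Fin.coe_castSucc]
  rw [show (k + 1 + (k + 1)) = 2*(k+1) from by ring,
    show (k + 1 + k) = 2*k+1 from by ring]
  rw [pow_succ, show ((-1 : ℝ) ^ (2*(k+1)) = 1) from by rw [pow_mul]; norm_num,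
    show ((-1 : ℝ) ^ (2*k) = 1) from by rw [pow_mul]; norm_num]
  ring

lemma fact_ne (n : ℕ) : ((Nat.factorial n : ℝ)) ≠ 0 := by
  exact_mod_cast Nat.factorial_ne_zero n

/-- Closed-form determinantal solution of the even-parity QES recurrences. -/
theorem even_parity_QES_closed_form (N : ℕ) (hN : 1 ≤ N) (d : ℝ) (a : ℕ → ℝ)
    (h0 : a 0 = 1) (h1 : a 1 = -d)
    (hrec : ∀ n : ℕ, (2 * (N : ℝ) - 2 * n) * a n + 2 * d * (n + 1) * a (n + 1)
      + (n + 1) * (n + 2) * a (n + 2) = 0) :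
    ∀ k : ℕ, 1 ≤ k →
      a k = ((-1 : ℝ) ^ k / ((Nat.factorial k : ℝ) * (Nat.factorial (k - 1) : ℝ)))
        * (Pmat N d k).det := by
  set c : ℕ → ℝ := fun m =>
    ((-1 : ℝ) ^ m / ((Nat.factorial m : ℝ) * (Nat.factorial (m - 1) : ℝ))) * (Pmat N d m).det
    with hc
  have det1 : (Pmat N d 1).det = d := by
    rw [Matrix.det_fin_one, Pmat_apply]
    show pent N d 0 0 = d
    unfold pent; rw [if_pos ⟨rfl, rfl⟩]
  have det2 : (Pmat N d 2).det = 2*d^2 - 2*(N:ℝ) := by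
    rw [Matrix.det_fin_two, Pmat_apply, Pmat_apply, Pmat_apply, Pmat_apply]
    show pent N d 0 0 * pent N d 1 1 - pent N d 0 1 * pent N d 1 0 = _
    rw [show pent N d 0 0 = d from by unfold pent; rw [if_pos ⟨rfl, rfl⟩],
      pent_diag N d 1 (by omega),
      show pent N d 0 1 = 1 from by
        unfold pent; rw [if_neg (by omega), if_neg (by omega), if_pos ⟨rfl, rfl⟩],
      show pent N d 1 0 = 2*((N:ℝ) - 1 + 1) from by
        unfold pent
        rw [if_neg (by omega), if_neg (by omega), if_neg (by omega), if_neg (by omega),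
          if_pos rfl]
        norm_num]
    push_cast; ring
  have key : ∀ k : ℕ, a (k+1) = c (k+1) ∧ a (k+2) = c (k+2) := by
    intro k
    induction k with
    | zero =>
      constructor
      · rw [h1, hc]; norm_num [det1, Nat.factorial]
      · have h := hrec 0
        rw [h0, h1] at h
        push_cast at h
        have ha2 : a 2 = d^2 - (N:ℝ) := by linear_combination h / 2
        rw [ha2, hc]
        norm_num [det2, Nat.factorial]
        ring
    | succ k ih =>
      obtain ⟨ih1, ih2⟩ := ih
      refine ⟨ih2, ?_⟩
      have h := hrec (k+1)
      rw [ih1, ih2] at h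
      simp only [show k+1+1 = k+2 from rfl, show k+1+2 = k+3 from rfl] at h
      push_cast at h
      have hfac3 : (Nat.factorial (k+3) : ℝ)
          = ((k:ℝ)+3) * ((k:ℝ)+2) * ((k:ℝ)+1) * (Nat.factorial k : ℝ) := by
        rw [show k+3 = (k+2)+1 from rfl, Nat.factorial_succ, Nat.factorial_succ,
          Nat.factorial_succ]
        push_cast; ring
      have hfac2 : (Nat.factorial (k+2) : ℝ)
          = ((k:ℝ)+2) * ((k:ℝ)+1) * (Nat.factorial k : ℝ) := by
        rw [Nat.factorial_succ, Nat.factorial_succ]; push_cast; ring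
      have hfac1 : (Nat.factorial (k+1) : ℝ) = ((k:ℝ)+1) * (Nat.factorial k : ℝ) := by
        rw [Nat.factorial_succ]; push_cast; ring
      have hk0 : (Nat.factorial k : ℝ) ≠ 0 := fact_ne k
      have hc1 : c (k+1) = (-1:ℝ)^k * (-1) / (((k:ℝ)+1) * (Nat.factorial k : ℝ)^2)
          * (Pmat N d (k+1)).det := by
        rw [hc]
        simp only [show (k+1)-1 = k from rfl, hfac1, pow_succ]
        ring
      have hc2 : c (k+2) = (-1:ℝ)^k / ((((k:ℝ)+2) * ((k:ℝ)+1)^2) * (Nat.factorial k : ℝ)^2)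
          * (Pmat N d (k+2)).det := by
        rw [hc]
        simp only [show (k+2)-1 = k+1 from rfl, hfac2, hfac1, pow_succ]
        field_simp
      have hc3 : c (k+3) = (-1:ℝ)^k * (-1)
          / ((((k:ℝ)+3) * (((k:ℝ)+2) * ((k:ℝ)+1))^2) * (Nat.factorial k : ℝ)^2)
          * (Pmat N d (k+3)).det := by
        rw [hc]
        simp only [show (k+3)-1 = k+2 from rfl, hfac3, hfac2, pow_succ]
        field_simp
      have hdet3 : (Pmat N d (k+3)).det
          = 2*((k:ℝ)+2)*d * (Pmat N d (k+2)).det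
            - 2*((N:ℝ)-((k:ℝ)+1))*((k:ℝ)+1)*((k:ℝ)+2) * (Pmat N d (k+1)).det := by
        have h' := detP_rec N d (k+1) (by omega)
        change (Pmat N d (k+3)).det = 2*(((k+1:ℕ):ℝ)+1)*d * (Pmat N d (k+2)).det
          - 2*((N:ℝ)-((k+1:ℕ):ℝ))*((k+1:ℕ):ℝ)*(((k+1:ℕ):ℝ)+1) * (Pmat N d (k+1)).det at h'
        push_cast at h'
        linear_combination h'
      have hk1 : ((k:ℝ)+1) ≠ 0 := by positivity
      have hk2 : ((k:ℝ)+2) ≠ 0 := by positivity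
      have hk3 : ((k:ℝ)+3) ≠ 0 := by positivity
      have hgoal : ((k:ℝ)+2) * ((k:ℝ)+3) * c (k+3)
          = -((2 * (N:ℝ) - 2 * ((k:ℝ)+1)) * c (k+1) + 2 * d * ((k:ℝ)+2) * c (k+2)) := by
        rw [hc1, hc2, hc3, hdet3]
        field_simp
        ring
      have hmul : ((k:ℝ)+2) * ((k:ℝ)+3) * a (k+3) = ((k:ℝ)+2) * ((k:ℝ)+3) * c (k+3) := by
        linear_combination h - hgoal
      exact mul_left_cancel₀ (by positivity : ((k:ℝ)+2) * ((k:ℝ)+3) ≠ 0) hmul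
  intro k hk
  obtain ⟨j, rfl⟩ : ∃ j, k = j + 1 := ⟨k - 1, by omega⟩
  exact (key j).1
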